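/- The bar complex CB_*(C) is a differential graded Lie(C)-comodule: for every n ≥ 0, the diagonal coaction commutes with the bar differential, i.e. ρ_{n+1} ∘ d^{CB}_n = (d^{CB}_n ⊗ id_C) ∘ ρ_n as maps C^{⊗n} → C^{⊗(n+1)} ⊗ C. -/

import Mathlib

open TensorProduct PiTensorProduct

noncomputable section

variable (k : Type) [Field k] (C : Type) [AddCommGroup C] [Module k C]

abbrev tpow (n : ℕ) : Type := ⨂[k] (_ : Fin n), C

variable {k C}

def tcast {m n : ℕ} (h : m = n) : tpow k C m ≃ₗ[k] tpow k C n :=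
  PiTensorProduct.reindex k (fun _ => C) (finCongr h)

def mulE (m n : ℕ) : (tpow k C m ⊗[k] tpow k C n) ≃ₗ[k] tpow k C (m + n) :=
  (PiTensorProduct.tmulEquiv k C).trans
    (PiTensorProduct.reindex k (fun _ => C) finSumFinEquiv)

def eC : C ≃ₗ[k] tpow k C 1 :=
  (PiTensorProduct.subsingletonEquiv (R := k) (s := fun _ : Fin 1 => C) (0 : Fin 1)).symm

def permAct {n : ℕ} (σ : Equiv.Perm (Fin n)) : tpow k C n ≃ₗ[k] tpow k C n :=
  PiTensorProduct.reindex k (fun _ => C) σ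

def tauPow (n : ℕ) (j : ℤ) : tpow k C n ≃ₗ[k] tpow k C n :=
  permAct ((finRotate n) ^ j)

def eps (n : ℕ) : tpow k C n →ₗ[k] tpow k C n :=
  ∑ σ : Equiv.Perm (Fin n),
    ((Equiv.Perm.sign σ : ℤ) : k) • (permAct σ).toLinearMap


set_option linter.unreachableTactic false
set_option linter.unusedTactic false
set_option linter.unusedSectionVars false
set_option maxHeartbeats 1000000

-- base computation lemmas
lemma tcast_tprod {m n : ℕ} (h : m = n) (f : Fin m → C) :
    tcast (k := k) h (tprod k f) = tprod k (fun i : Fin n => f ⟨i, by omega⟩) := by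
  rw [tcast, reindex_tprod]
  rfl

lemma mulE_tprod (m n : ℕ) (f : Fin m → C) (g : Fin n → C) :
    mulE (k := k) m n (tprod k f ⊗ₜ tprod k g)
      = tprod k (fun t : Fin (m + n) =>
          if h : (t : ℕ) < m then f ⟨t, h⟩ else g ⟨(t : ℕ) - m, by omega⟩) := by
  rw [mulE, LinearEquiv.trans_apply, tmulEquiv_apply, reindex_tprod]
  congr 1
  funext t
  rcases h : finSumFinEquiv.symm t with j | j
  · have ht : t = Fin.castAdd n j := by
      have := congrArg finSumFinEquiv h
      simpa using this
    subst ht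
    simp [Fin.castAdd]
  · have ht : t = Fin.natAdd m j := by
      have := congrArg finSumFinEquiv h
      simpa using this
    subst ht
    have : ¬ ((Fin.natAdd m j : Fin (m+n)) : ℕ) < m := by simp
    simp only [this, dif_neg]
    simp

lemma mulE_symm_tprod (m n : ℕ) (f : Fin (m + n) → C) :
    (mulE (k := k) (C := C) m n).symm (tprod k f)
      = tprod k (fun i : Fin m => f ⟨i, by omega⟩) ⊗ₜ
        tprod k (fun i : Fin n => f ⟨m + i, by omega⟩) := by
  rw [LinearEquiv.symm_apply_eq, mulE_tprod]
  congr 1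
  funext t
  split_ifs with h
  · rfl
  · congr 1
    exact Fin.ext (by simp; omega)

lemma eC_symm_tprod (f : Fin 1 → C) : (eC (k := k)).symm (tprod k f) = f 0 := by
  rw [eC, LinearEquiv.symm_symm]
  exact subsingletonEquiv_apply_tprod _ _

lemma eC_apply (c : C) : eC (k := k) c = tprod k (fun _ : Fin 1 => c) :=
  ((LinearEquiv.symm_apply_eq eC).mp (eC_symm_tprod (fun _ : Fin 1 => c))).symm


/-- insert y,z at positions p, p+1 -/
def insF {n : ℕ} (p : Fin n) (f : Fin n → C) (y z : C) : Fin (n+1) → C :=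
  fun t => if h1 : (t : ℕ) < (p : ℕ) then f ⟨t, lt_trans h1 p.isLt⟩
    else if h2 : (t : ℕ) = (p : ℕ) then y
    else if h3 : (t : ℕ) = (p : ℕ) + 1 then z
    else f ⟨(t : ℕ) - 1, by have := p.isLt; have := t.isLt; omega⟩

lemma insF_eq_update2 {n : ℕ} (p : Fin n) (f : Fin n → C) (y z : C) :
    insF p f y z
      = Function.update (Function.update (insF p f 0 0) p.castSucc y) p.succ z := by
  funext t
  rcases t with ⟨t, ht⟩
  rcases p with ⟨p, hp⟩
  simp only [insF, Function.update_apply, Fin.ext_iff, Fin.castSucc_mk, Fin.succ_mk, Fin.coe_castSucc, Fin.val_succ, Fin.mk.injEq, Fin.val_mk]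
  split_ifs <;> simp -failIfUnchanged only [Fin.castSucc_mk, Fin.succ_mk, Fin.coe_castSucc, Fin.val_succ, Fin.val_mk] at * <;> first | rfl | omega | (congr 1; simp only [Fin.mk.injEq]; omega)

/-- position of slot q after inserting a pair at slot p -/
def shP {n : ℕ} (p q : Fin n) : Fin (n+1) :=
  if (q : ℕ) < (p : ℕ) then q.castSucc else q.succ

lemma shP_val {n : ℕ} (p q : Fin n) :
    ((shP p q : Fin (n+1)) : ℕ) = if (q : ℕ) < (p : ℕ) then (q : ℕ) else (q : ℕ) + 1 := by
  simp [shP]; split_ifs <;> simp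

lemma update_insF_castSucc {n : ℕ} (p : Fin n) (f : Fin n → C) (y z y' : C) :
    Function.update (insF p f y z) p.castSucc y' = insF p f y' z := by
  funext t
  rcases t with ⟨t, ht⟩
  rcases p with ⟨p, hp⟩
  simp only [insF, Function.update_apply, Fin.ext_iff, Fin.castSucc_mk, Fin.succ_mk, Fin.coe_castSucc, Fin.val_succ, Fin.mk.injEq, Fin.val_mk]
  split_ifs <;> simp -failIfUnchanged only [Fin.castSucc_mk, Fin.succ_mk, Fin.coe_castSucc, Fin.val_succ, Fin.val_mk] at * <;> first | rfl | omega | (congr 1; simp only [Fin.mk.injEq]; omega)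

lemma update_insF_succ {n : ℕ} (p : Fin n) (f : Fin n → C) (y z z' : C) :
    Function.update (insF p f y z) p.succ z' = insF p f y z' := by
  funext t
  rcases t with ⟨t, ht⟩
  rcases p with ⟨p, hp⟩
  simp only [insF, Function.update_apply, Fin.ext_iff, Fin.castSucc_mk, Fin.succ_mk, Fin.coe_castSucc, Fin.val_succ, Fin.mk.injEq, Fin.val_mk]
  split_ifs <;> simp -failIfUnchanged only [Fin.castSucc_mk, Fin.succ_mk, Fin.coe_castSucc, Fin.val_succ, Fin.val_mk] at * <;> first | rfl | omega | (congr 1; simp only [Fin.mk.injEq]; omega)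

lemma update_insF_shP {n : ℕ} (p q : Fin n) (hq : q ≠ p) (f : Fin n → C) (y z u : C) :
    Function.update (insF p f y z) (shP p q) u = insF p (Function.update f q u) y z := by
  have hq' : (q : ℕ) ≠ (p : ℕ) := fun h => hq (Fin.ext h)
  have hv := shP_val p q
  funext t
  rcases t with ⟨t, ht⟩
  rcases p with ⟨p, hp⟩
  rcases q with ⟨q, hqlt⟩
  simp only [Fin.val_mk] at hq' hv
  simp only [insF, Function.update_apply, Fin.ext_iff, hv, Fin.val_mk]
  split_ifs <;> first | rfl | omega | (congr 1; simp only [Fin.mk.injEq]; omega)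

lemma insF_update_self {n : ℕ} (p : Fin n) (f : Fin n → C) (y z u : C) :
    insF p (Function.update f p u) y z = insF p f y z := by
  funext t
  rcases t with ⟨t, ht⟩
  rcases p with ⟨p, hp⟩
  simp only [insF, Function.update_apply, Fin.ext_iff]
  split_ifs <;> simp -failIfUnchanged only [Fin.castSucc_mk, Fin.succ_mk, Fin.coe_castSucc, Fin.val_succ, Fin.val_mk] at * <;> first | rfl | omega | (congr 1; simp only [Fin.mk.injEq]; omega)

lemma insF_castSucc {n : ℕ} (p : Fin n) (f : Fin n → C) (y z : C) :
    insF p f y z p.castSucc = y := by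
  simp only [insF, Fin.coe_castSucc]
  split_ifs <;> first | rfl | omega

lemma insF_succ {n : ℕ} (p : Fin n) (f : Fin n → C) (y z : C) :
    insF p f y z p.succ = z := by
  simp only [insF, Fin.val_succ]
  split_ifs <;> first | rfl | omega

lemma insF_shP {n : ℕ} (p q : Fin n) (hq : q ≠ p) (f : Fin n → C) (y z : C) :
    insF p f y z (shP p q) = f q := by
  have hq' : (q : ℕ) ≠ (p : ℕ) := fun h => hq (Fin.ext h)
  have hv := shP_val p q
  rcases p with ⟨p, hp⟩
  rcases q with ⟨q, hqlt⟩
  simp only [Fin.val_mk] at hq' hv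
  simp only [insF, hv, Fin.val_mk]
  split_ifs <;> first | rfl | omega | (congr 1; simp only [Fin.mk.injEq]; omega)

lemma insF_as_updateY {n : ℕ} (p : Fin n) (f : Fin n → C) (y z : C) :
    insF p f y z
      = Function.update (Function.update (insF p f 0 0) p.succ z) p.castSucc y := by
  rw [insF_eq_update2 p f y z,
    Function.update_comm (Fin.castSucc_lt_succ (i := p)).ne]

def insL {n : ℕ} (p : Fin n) (f : Fin n → C) : C ⊗[k] C →ₗ[k] (⨂[k] (_ : Fin (n+1)), C) :=
  TensorProduct.lift <| LinearMap.mk₂ k (fun y z => tprod k (insF p f y z))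
    (fun y₁ y₂ z => by
      rw [insF_as_updateY p f (y₁ + y₂) z, insF_as_updateY p f y₁ z,
        insF_as_updateY p f y₂ z]
      exact MultilinearMap.map_update_add _ _ _ _ _)
    (fun c y z => by
      rw [insF_as_updateY p f (c • y) z, insF_as_updateY p f y z]
      exact MultilinearMap.map_update_smul _ _ _ _ _)
    (fun y z₁ z₂ => by
      rw [insF_eq_update2 p f y (z₁ + z₂), insF_eq_update2 p f y z₁,
        insF_eq_update2 p f y z₂]
      exact MultilinearMap.map_update_add _ _ _ _ _)
    (fun c y z => by
      rw [insF_eq_update2 p f y (c • z), insF_eq_update2 p f y z]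
      exact MultilinearMap.map_update_smul _ _ _ _ _)

@[simp] lemma insL_tmul {n : ℕ} (p : Fin n) (f : Fin n → C) (y z : C) :
    insL p f (y ⊗ₜ z) = tprod k (insF p f y z) := by
  simp [insL]

def repL {n : ℕ} (p : Fin n) (f : Fin n → C) :
    C ⊗[k] C →ₗ[k] (⨂[k] (_ : Fin n), C) ⊗[k] C :=
  TensorProduct.lift <| LinearMap.mk₂ k
    (fun y z => tprod k (Function.update f p y) ⊗ₜ z)
    (fun y₁ y₂ z => by
      rw [MultilinearMap.map_update_add]
      exact add_tmul _ _ _)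
    (fun c y z => by
      rw [MultilinearMap.map_update_smul]
      exact smul_tmul' _ _ _)
    (fun y z₁ z₂ => tmul_add _ _ _)
    (fun c y z => by rw [tmul_smul])

@[simp] lemma repL_tmul {n : ℕ} (p : Fin n) (f : Fin n → C) (y z : C) :
    repL p f (y ⊗ₜ z) = tprod k (Function.update f p y) ⊗ₜ z := by
  simp [repL]


variable (D : C →ₗ[k] C ⊗[k] C)

/-- Apply `D : C → C ⊗ C` to the factor in position `a` (0-indexed) of `C^{⊗(a+1+b)}`,
leaving the two outputs in positions `a`, `a+1`. -/
def insertAt (a b : ℕ) : tpow k C (a + 1 + b) →ₗ[k] tpow k C (a + 1 + b + 1) :=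
  (tcast (show a + 1 + (1 + b) = a + 1 + b + 1 by omega)).toLinearMap ∘ₗ
  (mulE (a + 1) (1 + b)).toLinearMap ∘ₗ
  (TensorProduct.map (mulE a 1).toLinearMap (mulE 1 b).toLinearMap) ∘ₗ
  (TensorProduct.map (TensorProduct.map LinearMap.id eC.toLinearMap)
      (TensorProduct.map eC.toLinearMap LinearMap.id)) ∘ₗ
  (TensorProduct.assoc k (tpow k C a ⊗[k] C) C (tpow k C b)).toLinearMap ∘ₗ
  (TensorProduct.map (TensorProduct.assoc k (tpow k C a) C C).symm.toLinearMap LinearMap.id) ∘ₗ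
  (TensorProduct.map (TensorProduct.map LinearMap.id D) LinearMap.id) ∘ₗ
  (TensorProduct.map (TensorProduct.map LinearMap.id eC.symm.toLinearMap) LinearMap.id) ∘ₗ
  (TensorProduct.map (mulE a 1).symm.toLinearMap LinearMap.id) ∘ₗ
  (mulE (a + 1) b).symm.toLinearMap


/-- base function gluing `u` (first `a` slots) and `v` (last `b` slots); slot `a` is junk. -/
def gfun (a b : ℕ) (u : Fin a → C) (v : Fin b → C) : Fin (a + 1 + b) → C :=
  fun t => if h : (t : ℕ) < a then u ⟨t, h⟩
    else if h2 : (t : ℕ) = a then 0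
    else v ⟨(t : ℕ) - (a + 1), by have := t.isLt; omega⟩

def postIns (a b : ℕ) : ((tpow k C a ⊗[k] (C ⊗[k] C)) ⊗[k] tpow k C b) →ₗ[k] tpow k C (a + 1 + b + 1) :=
  (tcast (show a + 1 + (1 + b) = a + 1 + b + 1 by omega)).toLinearMap ∘ₗ
  (mulE (a + 1) (1 + b)).toLinearMap ∘ₗ
  (TensorProduct.map (mulE a 1).toLinearMap (mulE 1 b).toLinearMap) ∘ₗ
  (TensorProduct.map (TensorProduct.map LinearMap.id eC.toLinearMap)
      (TensorProduct.map eC.toLinearMap LinearMap.id)) ∘ₗ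
  (TensorProduct.assoc k (tpow k C a ⊗[k] C) C (tpow k C b)).toLinearMap ∘ₗ
  (TensorProduct.map (TensorProduct.assoc k (tpow k C a) C C).symm.toLinearMap LinearMap.id)

lemma postIns_tmul (a b : ℕ) (u : Fin a → C) (v : Fin b → C) (w : C ⊗[k] C) :
    postIns a b ((tprod k u ⊗ₜ w) ⊗ₜ tprod k v)
      = insL (⟨a, by omega⟩ : Fin (a + 1 + b)) (gfun a b u v) w := by
  induction w using TensorProduct.induction_on with
  | zero => simp [tmul_zero, zero_tmul]
  | add w₁ w₂ ih₁ ih₂ => rw [tmul_add, add_tmul, map_add, map_add, ih₁, ih₂]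
  | tmul y z =>
    simp only [postIns, LinearMap.comp_apply, LinearEquiv.coe_coe, map_tmul,
      TensorProduct.assoc_symm_tmul, TensorProduct.assoc_tmul, LinearMap.id_coe, id_eq,
      eC_apply, mulE_tprod, tcast_tprod, insL_tmul]
    congr 1
    funext t
    rcases t with ⟨t, ht⟩
    simp only [insF, gfun, Fin.val_mk]
    split_ifs <;> first | rfl | omega | (congr 1; simp only [Fin.mk.injEq]; omega)


lemma insertAt_eq (a b : ℕ) :
    insertAt D a b = postIns a b ∘ₗ
      (TensorProduct.map (TensorProduct.map LinearMap.id D) LinearMap.id) ∘ₗ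
      (TensorProduct.map (TensorProduct.map LinearMap.id eC.symm.toLinearMap) LinearMap.id) ∘ₗ
      (TensorProduct.map (mulE a 1).symm.toLinearMap LinearMap.id) ∘ₗ
      (mulE (a + 1) b).symm.toLinearMap := rfl

lemma insF_congr {n : ℕ} (p : Fin n) (f f' : Fin n → C) (y z : C)
    (h : ∀ t, t ≠ p → f t = f' t) : insF p f y z = insF p f' y z := by
  funext t
  rcases t with ⟨t, ht⟩
  rcases p with ⟨p, hp⟩
  simp only [insF, Fin.val_mk]
  split_ifs <;> first
    | rfl
    | omega
    | (apply h; simp only [ne_eq, Fin.mk.injEq]; omega)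

lemma insL_congr {n : ℕ} (p : Fin n) (f f' : Fin n → C)
    (h : ∀ t, t ≠ p → f t = f' t) : insL (k := k) p f = insL p f' := by
  apply TensorProduct.ext'
  intro y z
  rw [insL_tmul, insL_tmul, insF_congr p f f' y z h]

lemma insertAt_tprod (a b : ℕ) (f : Fin (a + 1 + b) → C) :
    insertAt D a b (tprod k f)
      = insL (⟨a, by omega⟩ : Fin (a + 1 + b)) f (D (f ⟨a, by omega⟩)) := by
  rw [insertAt_eq]
  simp only [LinearMap.comp_apply, LinearEquiv.coe_coe, mulE_symm_tprod, map_tmul,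
    eC_symm_tprod, LinearMap.id_coe, id_eq, postIns_tmul]
  have harg : f ⟨a + ((0 : Fin 1) : ℕ), by omega⟩ = f ⟨a, by omega⟩ := by
    congr 1
  rw [harg]
  congr 1
  apply insL_congr
  intro t htne
  have htne' : (t : ℕ) ≠ a := fun hh => htne (Fin.ext (by simpa using hh))
  rcases t with ⟨t, ht⟩
  simp only [Fin.val_mk] at htne'
  simp only [gfun, Fin.val_mk]
  split_ifs <;> first | rfl | omega | (congr 1; simp only [Fin.mk.injEq]; omega)

/-- `∂_j = id^{⊗j} ⊗ D ⊗ id^{⊗(n-1-j)} : C^{⊗n} → C^{⊗(n+1)}`. -/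
def del {n : ℕ} (j : Fin n) : tpow k C n →ₗ[k] tpow k C (n + 1) :=
  (tcast (show (j : ℕ) + 1 + (n - 1 - (j : ℕ)) + 1 = n + 1 by
      have := j.isLt; omega)).toLinearMap ∘ₗ
  insertAt D (j : ℕ) (n - 1 - (j : ℕ)) ∘ₗ
  (tcast (show n = (j : ℕ) + 1 + (n - 1 - (j : ℕ)) by
      have := j.isLt; omega)).toLinearMap

/-- The bar differential `d^{CB}_n = Σ_{j=0}^{n-1} (-1)^j ∂_j`. -/
def dCB (n : ℕ) : tpow k C n →ₗ[k] tpow k C (n + 1) :=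
  ∑ j : Fin n, ((-1 : k) ^ (j : ℕ)) • del D j

/-- `∂_0`, defined as `0` when `n = 0`. -/
def del0 (n : ℕ) : tpow k C n →ₗ[k] tpow k C (n + 1) :=
  if h : 0 < n then del D (⟨0, h⟩ : Fin n) else 0

/-- The Hochschild differential `d^{CH}_n = d^{CB}_n + (-1)^n τ_{n+1}⁻¹ ∘ ∂_0`. -/
def dCH (n : ℕ) : tpow k C n →ₗ[k] tpow k C (n + 1) :=
  dCB D n + ((-1 : k) ^ n) • ((tauPow (n + 1) (-1)).toLinearMap ∘ₗ del0 D n)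

/-- Apply `D` at position `a` of `C^{⊗(a+1+b)}` and move the second output leg to the very end,
yielding a map `C^{⊗(a+1+b)} → C^{⊗(a+1+b)} ⊗ C`. -/
def coactAt (a b : ℕ) : tpow k C (a + 1 + b) →ₗ[k] tpow k C (a + 1 + b) ⊗[k] C :=
  (TensorProduct.map (mulE (a + 1) b).toLinearMap LinearMap.id) ∘ₗ
  (TensorProduct.map (TensorProduct.map (mulE a 1).toLinearMap LinearMap.id) LinearMap.id) ∘ₗ
  (TensorProduct.map (TensorProduct.map (TensorProduct.map LinearMap.id eC.toLinearMap)
      LinearMap.id) LinearMap.id) ∘ₗ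
  (TensorProduct.assoc k (tpow k C a ⊗[k] C) (tpow k C b) C).symm.toLinearMap ∘ₗ
  (TensorProduct.map LinearMap.id (TensorProduct.comm k C (tpow k C b)).toLinearMap) ∘ₗ
  (TensorProduct.assoc k (tpow k C a ⊗[k] C) C (tpow k C b)).toLinearMap ∘ₗ
  (TensorProduct.map (TensorProduct.assoc k (tpow k C a) C C).symm.toLinearMap LinearMap.id) ∘ₗ
  (TensorProduct.map (TensorProduct.map LinearMap.id D) LinearMap.id) ∘ₗ
  (TensorProduct.map (TensorProduct.map LinearMap.id eC.symm.toLinearMap) LinearMap.id) ∘ₗ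
  (TensorProduct.map (mulE a 1).symm.toLinearMap LinearMap.id) ∘ₗ
  (mulE (a + 1) b).symm.toLinearMap

/-- The diagonal coaction `ρ_n : C^{⊗n} → C^{⊗n} ⊗ C`,
`ρ_n(x¹⊗⋯⊗xⁿ) = Σ_j (x¹⊗⋯⊗(x^j)_{[1]}⊗⋯⊗xⁿ) ⊗ (x^j)_{[2]}` where `D x = x_{[1]} ⊗ x_{[2]}`. -/
def coact (n : ℕ) : tpow k C n →ₗ[k] tpow k C n ⊗[k] C :=
  ∑ j : Fin n,
    (TensorProduct.map
      (tcast (show (j : ℕ) + 1 + (n - 1 - (j : ℕ)) = n by have := j.isLt; omega)).toLinearMap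
      LinearMap.id) ∘ₗ
    coactAt D (j : ℕ) (n - 1 - (j : ℕ)) ∘ₗ
    (tcast (show n = (j : ℕ) + 1 + (n - 1 - (j : ℕ)) by have := j.isLt; omega)).toLinearMap


def postCo (a b : ℕ) :
    ((tpow k C a ⊗[k] (C ⊗[k] C)) ⊗[k] tpow k C b) →ₗ[k] tpow k C (a + 1 + b) ⊗[k] C :=
  (TensorProduct.map (mulE (a + 1) b).toLinearMap LinearMap.id) ∘ₗ
  (TensorProduct.map (TensorProduct.map (mulE a 1).toLinearMap LinearMap.id) LinearMap.id) ∘ₗ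
  (TensorProduct.map (TensorProduct.map (TensorProduct.map LinearMap.id eC.toLinearMap)
      LinearMap.id) LinearMap.id) ∘ₗ
  (TensorProduct.assoc k (tpow k C a ⊗[k] C) (tpow k C b) C).symm.toLinearMap ∘ₗ
  (TensorProduct.map LinearMap.id (TensorProduct.comm k C (tpow k C b)).toLinearMap) ∘ₗ
  (TensorProduct.assoc k (tpow k C a ⊗[k] C) C (tpow k C b)).toLinearMap ∘ₗ
  (TensorProduct.map (TensorProduct.assoc k (tpow k C a) C C).symm.toLinearMap LinearMap.id)

lemma coactAt_eq (a b : ℕ) :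
    coactAt D a b = postCo a b ∘ₗ
      (TensorProduct.map (TensorProduct.map LinearMap.id D) LinearMap.id) ∘ₗ
      (TensorProduct.map (TensorProduct.map LinearMap.id eC.symm.toLinearMap) LinearMap.id) ∘ₗ
      (TensorProduct.map (mulE a 1).symm.toLinearMap LinearMap.id) ∘ₗ
      (mulE (a + 1) b).symm.toLinearMap := rfl

lemma postCo_tmul (a b : ℕ) (u : Fin a → C) (v : Fin b → C) (w : C ⊗[k] C) :
    postCo a b ((tprod k u ⊗ₜ w) ⊗ₜ tprod k v)
      = repL (⟨a, by omega⟩ : Fin (a + 1 + b)) (gfun a b u v) w := by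
  induction w using TensorProduct.induction_on with
  | zero => simp [tmul_zero, zero_tmul]
  | add w₁ w₂ ih₁ ih₂ => rw [tmul_add, add_tmul, map_add, map_add, ih₁, ih₂]
  | tmul y z =>
    simp only [postCo, LinearMap.comp_apply, LinearEquiv.coe_coe, map_tmul,
      TensorProduct.assoc_symm_tmul, TensorProduct.assoc_tmul, TensorProduct.comm_tmul,
      LinearMap.id_coe, id_eq, eC_apply, mulE_tprod, repL_tmul]
    congr 1
    congr 1
    funext t
    rcases t with ⟨t, ht⟩
    simp only [gfun, Function.update_apply, Fin.ext_iff, Fin.val_mk]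
    split_ifs <;> first | rfl | omega | (congr 1; simp only [Fin.mk.injEq]; omega)

lemma repL_congr {n : ℕ} (p : Fin n) (f f' : Fin n → C)
    (h : ∀ t, t ≠ p → f t = f' t) : repL (k := k) p f = repL p f' := by
  apply TensorProduct.ext'
  intro y z
  rw [repL_tmul, repL_tmul]
  congr 2
  funext t
  rcases eq_or_ne t p with hh | hh
  · subst hh; simp
  · rw [Function.update_of_ne hh, Function.update_of_ne hh]
    exact h t hh

lemma coactAt_tprod (a b : ℕ) (f : Fin (a + 1 + b) → C) :
    coactAt D a b (tprod k f)
      = repL (⟨a, by omega⟩ : Fin (a + 1 + b)) f (D (f ⟨a, by omega⟩)) := by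
  rw [coactAt_eq]
  simp only [LinearMap.comp_apply, LinearEquiv.coe_coe, mulE_symm_tprod, map_tmul,
    eC_symm_tprod, LinearMap.id_coe, id_eq, postCo_tmul]
  have harg : f ⟨a + ((0 : Fin 1) : ℕ), by omega⟩ = f ⟨a, by omega⟩ := by
    congr 1
  rw [harg]
  congr 1
  apply repL_congr
  intro t htne
  have htne' : (t : ℕ) ≠ a := fun hh => htne (Fin.ext (by simpa using hh))
  rcases t with ⟨t, ht⟩
  simp only [Fin.val_mk] at htne'
  simp only [gfun, Fin.val_mk]
  split_ifs <;> first | rfl | omega | (congr 1; simp only [Fin.mk.injEq]; omega)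


lemma del_tprod {n : ℕ} (j : Fin n) (f : Fin n → C) :
    del D j (tprod k f) = insL j f (D (f j)) := by
  have hj := j.isLt
  rw [del]
  simp only [LinearMap.comp_apply, LinearEquiv.coe_coe, tcast_tprod, insertAt_tprod]
  simp only [Fin.eta]
  generalize (D (f j)) = w
  induction w using TensorProduct.induction_on with
  | zero => simp
  | add w₁ w₂ ih₁ ih₂ => rw [map_add, map_add, map_add, ih₁, ih₂]
  | tmul y z =>
    rw [insL_tmul, insL_tmul, tcast_tprod]
    refine congrArg (⇑(PiTensorProduct.tprod k)) (funext fun t => ?_)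
    rcases t with ⟨t, ht⟩
    simp only [insF, Fin.val_mk]
    all_goals split_ifs <;> first | rfl | omega | (congr 1; simp only [Fin.mk.injEq]; omega)

lemma coact_tprod (n : ℕ) (f : Fin n → C) :
    coact D n (tprod k f) = ∑ j : Fin n, repL j f (D (f j)) := by
  rw [coact, LinearMap.sum_apply]
  apply Finset.sum_congr rfl
  intro j _
  have hj := j.isLt
  simp only [LinearMap.comp_apply, LinearEquiv.coe_coe, tcast_tprod, coactAt_tprod]
  simp only [Fin.eta]
  generalize (D (f j)) = w
  induction w using TensorProduct.induction_on with
  | zero => simp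
  | add w₁ w₂ ih₁ ih₂ => rw [map_add, map_add, map_add, ih₁, ih₂]
  | tmul y z =>
    simp only [repL_tmul, map_tmul, LinearMap.id_coe, id_eq, LinearEquiv.coe_coe, tcast_tprod]
    refine congrArg₂ (· ⊗ₜ[k] ·) (congrArg (⇑(PiTensorProduct.tprod k)) (funext fun t => ?_)) rfl
    rcases t with ⟨t, ht⟩
    simp only [Function.update_apply, Fin.ext_iff, Fin.val_mk]
    all_goals split_ifs <;> first | rfl | omega | (congr 1; simp only [Fin.mk.injEq]; omega)


lemma repL_update_add {n : ℕ} (p s : Fin n) (hs : s ≠ p) (g : Fin n → C) (y₁ y₂ : C)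
    (w : C ⊗[k] C) :
    repL p (Function.update g s (y₁ + y₂)) w
      = repL p (Function.update g s y₁) w + repL p (Function.update g s y₂) w := by
  induction w using TensorProduct.induction_on with
  | zero => simp
  | add w₁ w₂ ih₁ ih₂ =>
    rw [map_add, map_add, map_add, ih₁, ih₂]
    abel
  | tmul u c =>
    simp only [repL_tmul]
    rw [Function.update_comm hs, MultilinearMap.map_update_add, add_tmul,
      ← Function.update_comm hs, ← Function.update_comm hs]

lemma repL_update_smul {n : ℕ} (p s : Fin n) (hs : s ≠ p) (g : Fin n → C) (c : k) (y : C)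
    (w : C ⊗[k] C) :
    repL p (Function.update g s (c • y)) w = c • repL p (Function.update g s y) w := by
  induction w using TensorProduct.induction_on with
  | zero => simp
  | add w₁ w₂ ih₁ ih₂ =>
    rw [map_add, ih₁, ih₂, map_add, smul_add]
  | tmul u c' =>
    simp only [repL_tmul]
    rw [Function.update_comm hs, MultilinearMap.map_update_smul, smul_tmul',
      ← Function.update_comm hs]

lemma shP_ne_castSucc {n : ℕ} (i q : Fin n) (hq : q ≠ i) : i.castSucc ≠ shP i q := by
  have h1 := shP_val i q
  have h2 : (q : ℕ) ≠ (i : ℕ) := fun h => hq (Fin.ext h)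
  intro h
  rw [Fin.ext_iff, Fin.coe_castSucc, h1] at h
  split_ifs at h <;> omega

lemma shP_ne_succ {n : ℕ} (i q : Fin n) (hq : q ≠ i) : i.succ ≠ shP i q := by
  have h1 := shP_val i q
  have h2 : (q : ℕ) ≠ (i : ℕ) := fun h => hq (Fin.ext h)
  intro h
  rw [Fin.ext_iff, Fin.val_succ, h1] at h
  split_ifs at h <;> omega

/-- LHS off-diagonal term: insert `(y,z)` at `i`, then coact at the (shifted) position of `q`,
with `e` standing for `δ(f q)`. -/
def offT {n : ℕ} (i q : Fin n) (hq : q ≠ i) (f : Fin n → C) (e : C ⊗[k] C) :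
    C ⊗[k] C →ₗ[k] tpow k C (n + 1) ⊗[k] C :=
  TensorProduct.lift <| LinearMap.mk₂ k
    (fun y z => repL (shP i q) (insF i f y z) e)
    (fun y₁ y₂ z => by
      rw [insF_as_updateY i f (y₁ + y₂) z, insF_as_updateY i f y₁ z, insF_as_updateY i f y₂ z]
      exact repL_update_add _ _ (shP_ne_castSucc i q hq) _ _ _ _)
    (fun c y z => by
      rw [insF_as_updateY i f (c • y) z, insF_as_updateY i f y z]
      exact repL_update_smul _ _ (shP_ne_castSucc i q hq) _ _ _ _)
    (fun y z₁ z₂ => by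
      rw [insF_eq_update2 i f y (z₁ + z₂), insF_eq_update2 i f y z₁, insF_eq_update2 i f y z₂]
      exact repL_update_add _ _ (shP_ne_succ i q hq) _ _ _ _)
    (fun c y z => by
      rw [insF_eq_update2 i f y (c • z), insF_eq_update2 i f y z]
      exact repL_update_smul _ _ (shP_ne_succ i q hq) _ _ _ _)

@[simp] lemma offT_tmul {n : ℕ} (i q : Fin n) (hq : q ≠ i) (f : Fin n → C) (e : C ⊗[k] C)
    (y z : C) : offT i q hq f e (y ⊗ₜ z) = repL (shP i q) (insF i f y z) e := by
  simp [offT]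

lemma sum_fin_split {A : Type} [AddCommMonoid A] {n : ℕ} (i : Fin n) (F : Fin (n + 1) → A) :
    ∑ j : Fin (n + 1), F j
      = F i.castSucc + F i.succ + ∑ q ∈ Finset.univ.erase i, F (shP i q) := by
  have hvi := i.isLt
  have hinj : ∀ q1 ∈ Finset.univ.erase i, ∀ q2 ∈ Finset.univ.erase i,
      shP i q1 = shP i q2 → q1 = q2 := by
    intro q1 _ q2 _ h
    have h1 := shP_val i q1
    have h2 := shP_val i q2
    rw [Fin.ext_iff, h1, h2] at h
    apply Fin.ext
    split_ifs at h <;> omega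
  rw [← Finset.sum_image hinj]
  have hcs : i.castSucc ∉ insert i.succ ((Finset.univ.erase i).image (shP i)) := by
    simp only [Finset.mem_insert, Finset.mem_image, Finset.mem_erase]
    rintro (h | ⟨q, ⟨hq, -⟩, h⟩)
    · exact absurd (Fin.ext_iff.mp h) (by simp)
    · exact (shP_ne_castSucc i q hq) h.symm
  have hsu : i.succ ∉ (Finset.univ.erase i).image (shP i) := by
    simp only [Finset.mem_image, Finset.mem_erase]
    rintro ⟨q, ⟨hq, -⟩, h⟩
    exact (shP_ne_succ i q hq) h.symm
  have huniv : (Finset.univ : Finset (Fin (n + 1)))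
      = insert i.castSucc (insert i.succ ((Finset.univ.erase i).image (shP i))) := by
    apply Finset.eq_of_subset_of_card_le
    · intro j _
      simp only [Finset.mem_insert, Finset.mem_image, Finset.mem_erase, Finset.mem_univ,
        and_true]
      by_cases h1 : j = i.castSucc
      · exact Or.inl h1
      by_cases h2 : j = i.succ
      · exact Or.inr (Or.inl h2)
      refine Or.inr (Or.inr ?_)
      have hj := j.isLt
      have hne1 : (j : ℕ) ≠ (i : ℕ) := fun h => h1 (Fin.ext (by simpa using h))
      have hne2 : (j : ℕ) ≠ (i : ℕ) + 1 := fun h => h2 (Fin.ext (by simpa using h))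
      by_cases hlt : (j : ℕ) < (i : ℕ)
      · refine ⟨⟨j, by omega⟩, fun h => ?_, ?_⟩
        · rw [Fin.ext_iff, Fin.val_mk] at h; omega
        · apply Fin.ext
          rw [shP_val]
          simp only [Fin.val_mk]
          rw [if_pos hlt]
      · refine ⟨⟨(j : ℕ) - 1, by omega⟩, fun h => ?_, ?_⟩
        · rw [Fin.ext_iff, Fin.val_mk] at h; omega
        · apply Fin.ext
          rw [shP_val]
          simp only [Fin.val_mk]
          rw [if_neg (by omega)]
          omega
    · rw [Finset.card_insert_of_notMem hcs, Finset.card_insert_of_notMem hsu,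
        Finset.card_image_of_injOn (fun x hx y hy h => hinj x hx y hy h)]
      simp [Finset.card_erase_of_mem, Finset.card_univ]
      omega
  rw [huniv, Finset.sum_insert hcs, Finset.sum_insert hsu, add_assoc]


/-- The rearrangement `(u ⊗ c) ⊗ z ↦ (u ⊗ z) ⊗ c`. -/
def Pmap : ((C ⊗[k] C) ⊗[k] C) →ₗ[k] ((C ⊗[k] C) ⊗[k] C) :=
  (TensorProduct.assoc k C C C).symm.toLinearMap ∘ₗ
  (TensorProduct.map LinearMap.id (TensorProduct.comm k C C).toLinearMap) ∘ₗ
  (TensorProduct.assoc k C C C).toLinearMap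

@[simp] lemma Pmap_tmul (u c z : C) :
    Pmap ((u ⊗ₜ c) ⊗ₜ z) = (u ⊗ₜ[k] z) ⊗ₜ[k] c := by
  simp [Pmap]

lemma DgL_helper {n : ℕ} (i : Fin n) (f : Fin n → C) (y z : C) (w' : C ⊗[k] C) :
    (TensorProduct.map (insL i f) LinearMap.id) (Pmap (w' ⊗ₜ z))
      = repL i.castSucc (insF i f y z) w' := by
  induction w' using TensorProduct.induction_on with
  | zero => simp [zero_tmul]
  | add w₁ w₂ ih₁ ih₂ => rw [add_tmul, map_add, map_add, map_add, ih₁, ih₂]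
  | tmul u c =>
    rw [Pmap_tmul, map_tmul, insL_tmul, repL_tmul, update_insF_castSucc]
    rfl

lemma DgR_helper {n : ℕ} (i : Fin n) (f : Fin n → C) (y z : C) (w' : C ⊗[k] C) :
    (TensorProduct.map (insL i f) LinearMap.id)
        ((TensorProduct.assoc k C C C).symm (y ⊗ₜ w'))
      = repL i.succ (insF i f y z) w' := by
  induction w' using TensorProduct.induction_on with
  | zero => simp [tmul_zero]
  | add w₁ w₂ ih₁ ih₂ => rw [tmul_add, map_add, map_add, map_add, ih₁, ih₂]
  | tmul u c =>
    rw [TensorProduct.assoc_symm_tmul, map_tmul, insL_tmul, repL_tmul, update_insF_succ]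
    rfl

lemma offT_e_zero {n : ℕ} (i q : Fin n) (hq : q ≠ i) (f : Fin n → C) :
    offT (k := k) i q hq f 0 = 0 := by
  apply TensorProduct.ext'
  intro y z
  simp

lemma offT_e_add {n : ℕ} (i q : Fin n) (hq : q ≠ i) (f : Fin n → C) (e₁ e₂ : C ⊗[k] C) :
    offT i q hq f (e₁ + e₂) = offT i q hq f e₁ + offT i q hq f e₂ := by
  apply TensorProduct.ext'
  intro y z
  simp

lemma coact_insL_split {n : ℕ} (δ' : C →ₗ[k] C ⊗[k] C) (i : Fin n) (f : Fin n → C)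
    (w : C ⊗[k] C) :
    coact δ' (n + 1) (insL i f w)
      = (TensorProduct.map (insL i f) LinearMap.id)
            (Pmap ((TensorProduct.map δ' LinearMap.id) w))
        + (TensorProduct.map (insL i f) LinearMap.id)
            ((TensorProduct.assoc k C C C).symm ((TensorProduct.map LinearMap.id δ') w))
        + ∑ q ∈ (Finset.univ.erase i).attach,
            offT i q.1 (Finset.ne_of_mem_erase q.2) f (δ' (f q.1)) w := by
  induction w using TensorProduct.induction_on with
  | zero => simp
  | add w₁ w₂ ih₁ ih₂ =>
    simp only [map_add, ih₁, ih₂, Finset.sum_add_distrib]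
    abel
  | tmul y z =>
    rw [insL_tmul, coact_tprod, sum_fin_split i]
    congr 1
    · congr 1
      · rw [insF_castSucc, map_tmul]
        simp only [LinearMap.id_coe, id_eq]
        exact (DgL_helper i f y z (δ' y)).symm
      · rw [insF_succ, map_tmul]
        simp only [LinearMap.id_coe, id_eq]
        exact (DgR_helper i f y z (δ' z)).symm
    · rw [← Finset.sum_attach (Finset.univ.erase i)
        (fun q => repL (shP i q) (insF i f y z) (δ' (insF i f y z (shP i q))))]
      apply Finset.sum_congr rfl
      intro q _
      rw [offT_tmul, insF_shP i q.1 (Finset.ne_of_mem_erase q.2)]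

-- linear-map composition helpers for the coalgebra identity
lemma mapi_sub (g₁ g₂ : C →ₗ[k] C ⊗[k] C) :
    TensorProduct.map (g₁ - g₂) (LinearMap.id : C →ₗ[k] C)
      = TensorProduct.map g₁ LinearMap.id - TensorProduct.map g₂ LinearMap.id := by
  apply TensorProduct.ext'
  intro x y
  simp [sub_tmul]

lemma mapi_sub' (g₁ g₂ : C →ₗ[k] C ⊗[k] C) :
    TensorProduct.map (LinearMap.id : C →ₗ[k] C) (g₁ - g₂)
      = TensorProduct.map LinearMap.id g₁ - TensorProduct.map LinearMap.id g₂ := by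
  apply TensorProduct.ext'
  intro x y
  simp [tmul_sub]

lemma mapi_comp (g₁ : C ⊗[k] C →ₗ[k] C ⊗[k] C) (g₂ : C →ₗ[k] C ⊗[k] C) :
    TensorProduct.map (g₁ ∘ₗ g₂) (LinearMap.id : C →ₗ[k] C)
      = TensorProduct.map g₁ LinearMap.id ∘ₗ TensorProduct.map g₂ LinearMap.id := by
  apply TensorProduct.ext'
  intro x y
  simp

lemma mapi_comp' (g₁ : C ⊗[k] C →ₗ[k] C ⊗[k] C) (g₂ : C →ₗ[k] C ⊗[k] C) :
    TensorProduct.map (LinearMap.id : C →ₗ[k] C) (g₁ ∘ₗ g₂)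
      = TensorProduct.map LinearMap.id g₁ ∘ₗ TensorProduct.map LinearMap.id g₂ := by
  apply TensorProduct.ext'
  intro x y
  simp


def lieD' : C →ₗ[k] C ⊗[k] C :=
  (LinearMap.id - (TensorProduct.comm k C C).toLinearMap) ∘ₗ D

lemma core_identity
    (hco : (TensorProduct.assoc k C C C).toLinearMap ∘ₗ
        (TensorProduct.map D LinearMap.id) ∘ₗ D
      = (TensorProduct.map LinearMap.id D) ∘ₗ D) :
    Pmap ∘ₗ (TensorProduct.map (lieD' D) LinearMap.id) ∘ₗ D
      + (TensorProduct.assoc k C C C).symm.toLinearMap ∘ₗ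
          (TensorProduct.map LinearMap.id (lieD' D)) ∘ₗ D
      = (TensorProduct.map D LinearMap.id) ∘ₗ lieD' D := by
  set cm := (TensorProduct.comm k C C).toLinearMap with hcm
  have hδ : lieD' D = D - cm ∘ₗ D := by
    rw [lieD', LinearMap.sub_comp, LinearMap.id_comp]
  have hmapδ : TensorProduct.map (lieD' D) (LinearMap.id : C →ₗ[k] C)
      = TensorProduct.map D LinearMap.id
        - TensorProduct.map cm LinearMap.id ∘ₗ TensorProduct.map D LinearMap.id := by
    rw [hδ, mapi_sub, mapi_comp]
  have hmapδ' : TensorProduct.map (LinearMap.id : C →ₗ[k] C) (lieD' D)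
      = TensorProduct.map LinearMap.id D
        - TensorProduct.map LinearMap.id cm ∘ₗ TensorProduct.map LinearMap.id D := by
    rw [hδ, mapi_sub', mapi_comp']
  have h1 : ∀ x : C, (TensorProduct.map D (LinearMap.id : C →ₗ[k] C)) (D x)
      = (TensorProduct.assoc k C C C).symm ((TensorProduct.map (LinearMap.id : C →ₗ[k] C) D) (D x)) := by
    intro x
    have := DFunLike.congr_fun hco x
    simp only [LinearMap.comp_apply, LinearEquiv.coe_coe] at this
    rw [← this, LinearEquiv.symm_apply_apply]
  have I1 : Pmap ∘ₗ (TensorProduct.assoc k C C C).symm.toLinearMap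
      = (TensorProduct.assoc k C C C).symm.toLinearMap ∘ₗ
          TensorProduct.map (LinearMap.id : C →ₗ[k] C) cm := by
    apply TensorProduct.ext'
    intro x w
    induction w using TensorProduct.induction_on with
    | zero => simp [tmul_zero]
    | add w₁ w₂ ih₁ ih₂ => rw [tmul_add, map_add, map_add, ih₁, ih₂]
    | tmul y z => simp [hcm]
  have I2 : Pmap ∘ₗ (TensorProduct.map cm (LinearMap.id : C →ₗ[k] C)) ∘ₗ
        (TensorProduct.assoc k C C C).symm.toLinearMap
      = (TensorProduct.comm k C (C ⊗[k] C)).toLinearMap := by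
    apply TensorProduct.ext'
    intro x w
    induction w using TensorProduct.induction_on with
    | zero => simp [tmul_zero]
    | add w₁ w₂ ih₁ ih₂ => rw [tmul_add, map_add, map_add, ih₁, ih₂]
    | tmul y z => simp [hcm]
  have I3 : (TensorProduct.map D (LinearMap.id : C →ₗ[k] C)) ∘ₗ cm
      = (TensorProduct.comm k C (C ⊗[k] C)).toLinearMap ∘ₗ
          TensorProduct.map (LinearMap.id : C →ₗ[k] C) D := by
    apply TensorProduct.ext'
    intro x y
    simp [hcm]
  apply LinearMap.ext
  intro x
  have eI1 := DFunLike.congr_fun I1 ((TensorProduct.map (LinearMap.id : C →ₗ[k] C) D) (D x))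
  have eI2 := DFunLike.congr_fun I2 ((TensorProduct.map (LinearMap.id : C →ₗ[k] C) D) (D x))
  have eI3 := DFunLike.congr_fun I3 (D x)
  simp only [LinearMap.comp_apply, LinearEquiv.coe_coe] at eI1 eI2 eI3 ⊢
  simp only [LinearMap.add_apply, LinearMap.comp_apply, LinearEquiv.coe_coe]
  rw [hmapδ, hmapδ']
  simp only [LinearMap.sub_apply, LinearMap.comp_apply, map_sub]
  rw [hδ]
  simp only [LinearMap.sub_apply, LinearMap.comp_apply, map_sub]
  rw [h1 x, eI1, eI2, eI3]
  abel

lemma delmap_repL {n : ℕ} (i : Fin n) (f : Fin n → C) :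
    (TensorProduct.map (del D i) (LinearMap.id : C →ₗ[k] C)) ∘ₗ repL i f
      = (TensorProduct.map (insL i f) LinearMap.id) ∘ₗ
          (TensorProduct.map D LinearMap.id) := by
  apply TensorProduct.ext'
  intro u c
  simp only [LinearMap.comp_apply, repL_tmul, map_tmul, LinearMap.id_coe, id_eq]
  rw [del_tprod, Function.update_self]
  rw [insL_congr i (Function.update f i u) f
    (fun t ht => Function.update_of_ne ht u f)]

lemma diag_match {n : ℕ}
    (hco : (TensorProduct.assoc k C C C).toLinearMap ∘ₗ
        (TensorProduct.map D LinearMap.id) ∘ₗ D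
      = (TensorProduct.map LinearMap.id D) ∘ₗ D)
    (i : Fin n) (f : Fin n → C) :
    (TensorProduct.map (insL i f) LinearMap.id)
        (Pmap ((TensorProduct.map (lieD' D) LinearMap.id) (D (f i))))
      + (TensorProduct.map (insL i f) LinearMap.id)
          ((TensorProduct.assoc k C C C).symm
            ((TensorProduct.map LinearMap.id (lieD' D)) (D (f i))))
      = (TensorProduct.map (del D i) LinearMap.id) (repL i f (lieD' D (f i))) := by
  have hcore := DFunLike.congr_fun (core_identity D hco) (f i)
  simp only [LinearMap.add_apply, LinearMap.comp_apply, LinearEquiv.coe_coe] at hcore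
  rw [← map_add, hcore]
  have := DFunLike.congr_fun (delmap_repL D i f) (lieD' D (f i))
  simp only [LinearMap.comp_apply] at this
  rw [this]

lemma off_match {n : ℕ} (i q : Fin n) (hq : q ≠ i) (f : Fin n → C) (e : C ⊗[k] C) :
    offT i q hq f e (D (f i))
      = (TensorProduct.map (del D i) LinearMap.id) (repL q f e) := by
  induction e using TensorProduct.induction_on with
  | zero => rw [offT_e_zero]; simp
  | add e₁ e₂ ih₁ ih₂ =>
    rw [offT_e_add, LinearMap.add_apply, ih₁, ih₂, map_add, map_add]
  | tmul u c =>
    have h : offT i q hq f (u ⊗ₜ c)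
        = (TensorProduct.mk k (tpow k C (n + 1)) C).flip c ∘ₗ
            insL i (Function.update f q u) := by
      apply TensorProduct.ext'
      intro y z
      rw [offT_tmul, repL_tmul, update_insF_shP i q hq]
      simp only [LinearMap.comp_apply, insL_tmul, LinearMap.flip_apply,
        TensorProduct.mk_apply]
    rw [h]
    simp only [LinearMap.comp_apply, LinearMap.flip_apply, TensorProduct.mk_apply,
      repL_tmul, map_tmul, LinearMap.id_coe, id_eq]
    rw [del_tprod, Function.update_of_ne (Ne.symm hq)]

lemma map_dCB (n : ℕ) :
    TensorProduct.map (dCB D n) (LinearMap.id : C →ₗ[k] C)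
      = ∑ i : Fin n, ((-1 : k) ^ (i : ℕ)) •
          TensorProduct.map (del D i) LinearMap.id := by
  apply TensorProduct.ext'
  intro t c
  simp only [map_tmul, LinearMap.id_coe, id_eq, dCB, LinearMap.sum_apply,
    LinearMap.smul_apply, TensorProduct.sum_tmul, TensorProduct.smul_tmul']

/-- The diagonal coaction with codomain `C^{⊗(n+1)}`. -/
def coactE (n : ℕ) : tpow k C n →ₗ[k] tpow k C (n + 1) :=
  (mulE n 1).toLinearMap ∘ₗ (TensorProduct.map LinearMap.id eC.toLinearMap) ∘ₗ coact D n

/-- The Chevalley–Eilenberg summand `∂_j = ρ_{j+1} ⊗ id^{⊗(n-j-1)}` for `j : Fin n`. -/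
def CEdel {n : ℕ} (j : Fin n) : tpow k C n →ₗ[k] tpow k C (n + 1) :=
  (tcast (show (j : ℕ) + 1 + 1 + (n - ((j : ℕ) + 1)) = n + 1 by
      have := j.isLt; omega)).toLinearMap ∘ₗ
  (mulE ((j : ℕ) + 1 + 1) (n - ((j : ℕ) + 1))).toLinearMap ∘ₗ
  (TensorProduct.map (coactE D ((j : ℕ) + 1)) LinearMap.id) ∘ₗ
  (mulE ((j : ℕ) + 1) (n - ((j : ℕ) + 1))).symm.toLinearMap ∘ₗ
  (tcast (show n = (j : ℕ) + 1 + (n - ((j : ℕ) + 1)) by have := j.isLt; omega)).toLinearMap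

/-- The Chevalley–Eilenberg–Leibniz differential
`d^{CE}_n = Σ_{j=1}^n (-1)^{j-1} (ρ_j ⊗ id^{⊗(n-j)})`. -/
def dCE (n : ℕ) : tpow k C n →ₗ[k] tpow k C (n + 1) :=
  ∑ j : Fin n, ((-1 : k) ^ (j : ℕ)) • CEdel D j

/-- Extend `f : C^{⊗n} → C^{⊗m}` to `f ⊗ id : C^{⊗(n+1)} → C^{⊗(m+1)}`
acting on the first factors. -/
def extLast {n m : ℕ} (f : tpow k C n →ₗ[k] tpow k C m) :
    tpow k C (n + 1) →ₗ[k] tpow k C (m + 1) :=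
  (mulE m 1).toLinearMap ∘ₗ (TensorProduct.map f LinearMap.id) ∘ₗ (mulE n 1).symm.toLinearMap

/-- Apply `f` to the `m` middle factors (positions `p+1,…,p+m`) of `C^{⊗(p+m+r)}`. -/
def midOp (p m r : ℕ) (f : tpow k C m →ₗ[k] tpow k C m) :
    tpow k C (p + m + r) →ₗ[k] tpow k C (p + m + r) :=
  (mulE (p + m) r).toLinearMap ∘ₗ
  (TensorProduct.map
    ((mulE p m).toLinearMap ∘ₗ (TensorProduct.map LinearMap.id f) ∘ₗ
      (mulE p m).symm.toLinearMap)
    LinearMap.id) ∘ₗ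
  (mulE (p + m) r).symm.toLinearMap

/-- `ε_n ⊗ id : C^{⊗(n+1)} → C^{⊗(n+1)}`, antisymmetrizing the first `n` factors. -/
def epsHead (n : ℕ) : tpow k C (n + 1) →ₗ[k] tpow k C (n + 1) :=
  ∑ σ : Equiv.Perm (Fin n),
    ((Equiv.Perm.sign σ : ℤ) : k) •
      (permAct (finSumFinEquiv.permCongr (Equiv.sumCongr σ (Equiv.refl (Fin 1))))).toLinearMap

/-- `id ⊗ ε_m : C^{⊗(m+1)} → C^{⊗(m+1)}`, antisymmetrizing the last `m` factors. -/
def epsTail (m : ℕ) : tpow k C (m + 1) →ₗ[k] tpow k C (m + 1) :=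
  ∑ σ : Equiv.Perm (Fin m),
    ((Equiv.Perm.sign σ : ℤ) : k) •
      (permAct ((finCongr (show 1 + m = m + 1 by omega)).permCongr
        (finSumFinEquiv.permCongr (Equiv.sumCongr (Equiv.refl (Fin 1)) σ)))).toLinearMap

/-- The permutation of `Fin (n+1)` which moves the factor in position `j` to the end,
shifting the later ones down (as a reindexing function, it is the cycle rotating
positions `j,…,n`). -/
def moveEndPerm (n : ℕ) (j : Fin (n + 1)) : Equiv.Perm (Fin (n + 1)) :=
  (finCongr (show (j : ℕ) + (n + 1 - (j : ℕ)) = n + 1 by have := j.isLt; omega)).permCongr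
    (finSumFinEquiv.permCongr
      (Equiv.sumCongr (Equiv.refl (Fin (j : ℕ))) (finRotate (n + 1 - (j : ℕ)))))

/-- The contracting homotopy `h_{n+1} : C^{⊗(n+1)} → C^{⊗n} ⊗ C`,
`h(x¹⊗⋯⊗x^{n+1}) = Σ_j (-1)^j (x¹⊗⋯⊗\hat{x^j}⊗⋯⊗x^{n+1}) ⊗ x^j`. -/
def hBar (n : ℕ) : tpow k C (n + 1) →ₗ[k] tpow k C n ⊗[k] C :=
  ∑ j : Fin (n + 1), ((-1 : k) ^ ((j : ℕ) + 1)) •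
    ((TensorProduct.map LinearMap.id eC.symm.toLinearMap) ∘ₗ
      (mulE n 1).symm.toLinearMap ∘ₗ (permAct (moveEndPerm n j)⁻¹).toLinearMap)

/-- The contracting homotopy as an operator on `C^{⊗(n+1)}`. -/
def hOp (n : ℕ) : tpow k C (n + 1) →ₗ[k] tpow k C (n + 1) :=
  ∑ j : Fin (n + 1), ((-1 : k) ^ ((j : ℕ) + 1)) • (permAct (moveEndPerm n j)⁻¹).toLinearMap

/-- The norm operator `N_n = Σ_{j=0}^{n-1} (-1)^{(n-1)j} τ_n^j`. -/
def Nop (n : ℕ) : tpow k C n →ₗ[k] tpow k C n :=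
  ∑ j : Fin n, ((-1 : k) ^ ((n - 1) * (j : ℕ))) • (tauPow n (j : ℕ)).toLinearMap

/-- `t_n = id - (-1)^{n-1} τ_n⁻¹`. -/
def tOp (n : ℕ) : tpow k C n →ₗ[k] tpow k C n :=
  LinearMap.id - ((-1 : k) ^ (n - 1)) • (tauPow n (-1)).toLinearMap


/-- `i_n = (-1)^{n+1} · id`. -/
def iCE (n : ℕ) : tpow k C n →ₗ[k] tpow k C n :=
  ((-1 : k) ^ (n + 1)) • LinearMap.id

end

/-- The cobracket `δ = (id - τ) ∘ Δ` of the Lie coalgebra `Lie(C)`. -/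
noncomputable def lieD {k : Type} [Field k] {C : Type} [AddCommGroup C] [Module k C]
    (Δ : C →ₗ[k] C ⊗[k] C) : C →ₗ[k] C ⊗[k] C :=
  (LinearMap.id - (TensorProduct.comm k C C).toLinearMap) ∘ₗ Δ

lemma lieD_eq_lieD' {k : Type} [Field k] {C : Type} [AddCommGroup C] [Module k C]
    (Δ : C →ₗ[k] C ⊗[k] C) : lieD Δ = lieD' Δ := rfl

theorem statement (k : Type) [Field k] [CharZero k]
    (C : Type) [AddCommGroup C] [Module k C]
    (Δ : C →ₗ[k] C ⊗[k] C) (η : C →ₗ[k] k)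
    (hcoassoc : (TensorProduct.assoc k C C C).toLinearMap ∘ₗ
        (TensorProduct.map Δ LinearMap.id) ∘ₗ Δ
      = (TensorProduct.map LinearMap.id Δ) ∘ₗ Δ)
    (hcounitL : (TensorProduct.lid k C).toLinearMap ∘ₗ
        (TensorProduct.map η LinearMap.id) ∘ₗ Δ = LinearMap.id)
    (hcounitR : (TensorProduct.rid k C).toLinearMap ∘ₗ
        (TensorProduct.map LinearMap.id η) ∘ₗ Δ = LinearMap.id) :
    ∀ n : ℕ, coact (lieD Δ) (n + 1) ∘ₗ dCB Δ n
      = (TensorProduct.map (dCB Δ n) LinearMap.id) ∘ₗ coact (lieD Δ) n := by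
  intro n
  apply PiTensorProduct.ext
  apply MultilinearMap.ext
  intro f
  simp only [LinearMap.compMultilinearMap_apply, LinearMap.comp_apply]
  rw [lieD_eq_lieD']
  have hL : ∀ i : Fin n, coact (lieD' Δ) (n + 1) (insL i f (Δ (f i)))
      = ∑ q : Fin n, (TensorProduct.map (del Δ i) LinearMap.id)
          (repL q f (lieD' Δ (f q))) := by
    intro i
    rw [coact_insL_split, diag_match Δ hcoassoc i f]
    have hsum : ∑ q ∈ (Finset.univ.erase i).attach,
        offT i q.1 (Finset.ne_of_mem_erase q.2) f (lieD' Δ (f q.1)) (Δ (f i))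
        = ∑ q ∈ Finset.univ.erase i,
            (TensorProduct.map (del Δ i) LinearMap.id) (repL q f (lieD' Δ (f q))) := by
      rw [← Finset.sum_attach (Finset.univ.erase i)
        (fun q => (TensorProduct.map (del Δ i) LinearMap.id) (repL q f (lieD' Δ (f q))))]
      exact Finset.sum_congr rfl
        (fun q _ => off_match Δ i q.1 (Finset.ne_of_mem_erase q.2) f _)
    rw [hsum]
    exact Finset.add_sum_erase _ _ (Finset.mem_univ i)
  rw [dCB, LinearMap.sum_apply, map_sum]
  simp only [LinearMap.smul_apply, map_smul, del_tprod]
  simp only [hL]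
  rw [coact_tprod, map_sum]
  rw [show (∑ j : Fin n, ((-1 : k) ^ (j : ℕ)) • del Δ j) = dCB Δ n from rfl]
  simp only [map_dCB, LinearMap.sum_apply, LinearMap.smul_apply, Finset.smul_sum]
  rw [Finset.sum_comm]
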